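/- Let Γ₀, δ, Γ, K_Γ and τ be as in the context, and let n ≥ 2 be an integer. Set L := K_Γ[X] ⧸ (X^{n−1} − τ), the quotient of the polynomial ring by the principal ideal generated by X^{n−1} − τ. Then L is a field, and the quotient ring R := K_Γ[X] ⧸ (X^n − τ·X) is isomorphic, as a ring, to the product K_Γ × L; in particular R decomposes as a direct sum of two fields. -/

import Mathlib

open Polynomial

theorem aux_X_pow_sub_C_irreducible_of_pow_ne {K : Type*} [Field K] {m : ℕ} (hm : m ≠ 0) {a : K}
    (ha : ∀ (d : ℕ) (b : K), 0 < d → d < m → b ^ m ≠ a ^ d) :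
    Irreducible (X ^ m - C a) := by
  have hm0 : 0 < m := Nat.pos_of_ne_zero hm
  have hu : ¬ IsUnit ((X : K[X]) ^ m - C a) := by
    rw [Polynomial.isUnit_iff_degree_eq_zero, degree_X_pow_sub_C hm0, Nat.cast_eq_zero]
    exact hm
  have ⟨g, hg, hg'⟩ := WfDvdMonoid.exists_irreducible_factor hu (X_pow_sub_C_ne_zero hm0 a)
  suffices natDegree g = m from (associated_of_dvd_of_natDegree_le hg'
    (X_pow_sub_C_ne_zero hm0 a) (this.trans natDegree_X_pow_sub_C.symm).ge).irreducible hg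
  by_contra h
  have : Fact (Irreducible g) := ⟨hg⟩
  have key : (Algebra.norm K (AdjoinRoot.root g)) ^ m = a ^ g.natDegree := by
    have := Polynomial.eval₂_eq_zero_of_dvd_of_eval₂_eq_zero _ _ hg' (AdjoinRoot.eval₂_root g)
    rw [eval₂_sub, eval₂_pow, eval₂_C, eval₂_X, sub_eq_zero] at this
    rw [← map_pow, this, ← AdjoinRoot.algebraMap_eq, Algebra.norm_algebraMap,
      ← IntermediateField.finrank_top', ← IntermediateField.adjoin_root_eq_top g,
      IntermediateField.adjoin.finrank,
      AdjoinRoot.minpoly_root hg.ne_zero, natDegree_mul_C]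
    · simpa using hg.ne_zero
    · exact AdjoinRoot.isIntegral_root hg.ne_zero
  have hd1 : 0 < g.natDegree :=
    natDegree_pos_iff_degree_pos.mpr (Polynomial.degree_pos_of_irreducible hg)
  have hdm : g.natDegree < m := lt_of_le_of_ne
    ((natDegree_le_of_dvd hg' (X_pow_sub_C_ne_zero hm0 a)).trans_eq natDegree_X_pow_sub_C) h
  exact ha _ _ hd1 hdm key


theorem aux_decomposition {K : Type*} [Field K] {n : ℕ} (hn : 2 ≤ n) {τ : K} (hτ0 : τ ≠ 0) :
    Nonempty (AdjoinRoot ((X : K[X]) ^ n - C τ * X) ≃+*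
      K × AdjoinRoot ((X : K[X]) ^ (n - 1) - C τ)) := by
  have hpow2 : (X : K[X]) ^ (n - 2) * X = X ^ (n - 1) := by
    rw [← pow_succ]; congr 1; omega
  have hCτ : (C τ⁻¹ : K[X]) * C τ = 1 := by
    rw [← C_mul, inv_mul_cancel₀ hτ0, C_1]
  have hco : IsCoprime (X : K[X]) (X ^ (n - 1) - C τ) := by
    refine ⟨C τ⁻¹ * X ^ (n - 2), -C τ⁻¹, ?_⟩
    rw [mul_assoc, hpow2, ← hCτ]
    ring
  have hfg : (X : K[X]) ^ n - C τ * X = X * (X ^ (n - 1) - C τ) := by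
    have h1 : (X : K[X]) ^ n = X * X ^ (n - 1) := by
      rw [← pow_succ']; congr 1; omega
    rw [h1]; ring
  have hcop : IsCoprime (Ideal.span {(X : K[X])}) (Ideal.span {(X : K[X]) ^ (n - 1) - C τ}) :=
    (Ideal.isCoprime_span_singleton_iff _ _).mpr hco
  have hspan : (Ideal.span {(X : K[X]) ^ n - C τ * X}) =
      Ideal.span {(X : K[X])} ⊓ Ideal.span {(X : K[X]) ^ (n - 1) - C τ} := by
    rw [Ideal.inf_eq_mul_of_isCoprime hcop, Ideal.span_singleton_mul_span_singleton, hfg]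
  have e1 : AdjoinRoot ((X : K[X]) ^ n - C τ * X) ≃+*
      K[X] ⧸ (Ideal.span {(X : K[X])} ⊓ Ideal.span {(X : K[X]) ^ (n - 1) - C τ}) :=
    Ideal.quotEquivOfEq hspan
  have e2 := Ideal.quotientInfEquivQuotientProd (Ideal.span {(X : K[X])})
    (Ideal.span {(X : K[X]) ^ (n - 1) - C τ}) hcop
  have e3 : (K[X] ⧸ Ideal.span {(X : K[X])}) ≃+* K :=
    (Ideal.quotEquivOfEq (by rw [map_zero, sub_zero] :
        Ideal.span {(X : K[X])} = Ideal.span {X - C (0 : K)})).trans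
      (Polynomial.quotientSpanXSubCAlgEquiv (0 : K)).toRingEquiv
  exact ⟨e1.trans (e2.trans (RingEquiv.prodCongr e3 (RingEquiv.refl _)))⟩

set_option synthInstance.maxHeartbeats 1000000 in
set_option maxHeartbeats 1000000 in
theorem quotient_ring_decomposes_as_two_fields
    (Γ₀ : AddSubgroup ℝ) (δ : ℝ) (hδ : 0 < δ)
    (hind : δ ∉ Submodule.span ℚ (Γ₀ : Set ℝ))
    (n : ℕ) (hn : 2 ≤ n)
    (τ : HahnSeries ↥(Γ₀ ⊔ AddSubgroup.zmultiples δ) ℚ)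
    (hτ : τ = HahnSeries.single
      (⟨δ, (le_sup_right : AddSubgroup.zmultiples δ ≤ Γ₀ ⊔ AddSubgroup.zmultiples δ)
          (AddSubgroup.mem_zmultiples δ)⟩ : ↥(Γ₀ ⊔ AddSubgroup.zmultiples δ)) (1 : ℚ)) :
    IsField (AdjoinRoot ((X : Polynomial (HahnSeries ↥(Γ₀ ⊔ AddSubgroup.zmultiples δ) ℚ)) ^ (n - 1)
        - C τ)) ∧
    Nonempty
      (AdjoinRoot ((X : Polynomial (HahnSeries ↥(Γ₀ ⊔ AddSubgroup.zmultiples δ) ℚ)) ^ n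
          - C τ * X) ≃+*
        HahnSeries ↥(Γ₀ ⊔ AddSubgroup.zmultiples δ) ℚ ×
          AdjoinRoot ((X : Polynomial (HahnSeries ↥(Γ₀ ⊔ AddSubgroup.zmultiples δ) ℚ)) ^ (n - 1)
            - C τ)) := by
  have hδmem : δ ∈ Γ₀ ⊔ AddSubgroup.zmultiples δ :=
    (le_sup_right : AddSubgroup.zmultiples δ ≤ Γ₀ ⊔ AddSubgroup.zmultiples δ)
      (AddSubgroup.mem_zmultiples δ)
  have hτ0 : τ ≠ 0 := by rw [hτ]; exact HahnSeries.single_ne_zero one_ne_zero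
  have hm : n - 1 ≠ 0 := by omega
  -- the key valuation-theoretic fact
  have key : ∀ (d : ℕ) (b : HahnSeries ↥(Γ₀ ⊔ AddSubgroup.zmultiples δ) ℚ),
      0 < d → d < n - 1 → b ^ (n - 1) ≠ τ ^ d := by
    intro d b hd hdm heq
    have hb : b ≠ 0 := by
      rintro rfl
      rw [zero_pow hm] at heq
      exact pow_ne_zero d hτ0 heq.symm
    have horder : (n - 1) • b.order = d • (⟨δ, hδmem⟩ : ↥(Γ₀ ⊔ AddSubgroup.zmultiples δ)) := by
      have h1 : (b ^ (n - 1)).order = (n - 1) • b.order := HahnSeries.order_pow b (n - 1)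
      have h2 : (τ ^ d).order = d • (⟨δ, hδmem⟩ : ↥(Γ₀ ⊔ AddSubgroup.zmultiples δ)) := by
        rw [hτ, HahnSeries.single_pow, HahnSeries.order_single (by positivity)]
      rw [← h1, heq, h2]
    have hreal : ((n : ℝ) - 1) * ((b.order : ↥(Γ₀ ⊔ AddSubgroup.zmultiples δ)) : ℝ)
        = (d : ℝ) * δ := by
      have h3 := congrArg (Subtype.val) horder
      push_cast at h3
      rw [nsmul_eq_mul, nsmul_eq_mul, Nat.cast_sub (by omega : 1 ≤ n)] at h3
      push_cast at h3
      linarith [h3]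
    obtain ⟨y, hy, z, hz, hyz⟩ := AddSubgroup.mem_sup.mp (b.order).2
    obtain ⟨k, rfl⟩ := hz
    simp only [zsmul_eq_mul] at hyz
    rw [← hyz] at hreal
    -- hreal : (n - 1) * (y + k * δ) = d * δ
    by_cases hc : (d : ℝ) - ((n : ℝ) - 1) * (k : ℝ) = 0
    · have hint : (d : ℤ) = ((n : ℤ) - 1) * k := by
        have : (d : ℝ) = ((n : ℝ) - 1) * (k : ℝ) := by linarith
        exact_mod_cast this
      have h0m : (0 : ℤ) < (n : ℤ) - 1 := by
        have : (2 : ℤ) ≤ (n : ℤ) := by exact_mod_cast hn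
        omega
      have hd' : (0 : ℤ) < (d : ℤ) := by exact_mod_cast hd
      have hdm' : (d : ℤ) < (n : ℤ) - 1 := by
        have := hdm
        have : (d : ℤ) < ((n - 1 : ℕ) : ℤ) := by exact_mod_cast this
        omega
      have hk1 : (1 : ℤ) ≤ k := by nlinarith
      nlinarith
    · apply hind
      have hyδ : δ = (((n : ℝ) - 1) / ((d : ℝ) - ((n : ℝ) - 1) * (k : ℝ))) * y := by
        field_simp
        nlinarith [hreal]
      have hsm : δ = ((((n : ℚ) - 1) / ((d : ℚ) - ((n : ℚ) - 1) * (k : ℚ))) : ℚ) • y := by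
        rw [Rat.smul_def]
        push_cast
        exact hyδ
      rw [hsm]
      exact Submodule.smul_mem _ _ (Submodule.subset_span hy)
  have hirr : Irreducible ((X : Polynomial (HahnSeries ↥(Γ₀ ⊔ AddSubgroup.zmultiples δ) ℚ)) ^ (n - 1) - C τ) :=
    aux_X_pow_sub_C_irreducible_of_pow_ne hm key
  have : Fact (Irreducible ((X : Polynomial (HahnSeries ↥(Γ₀ ⊔ AddSubgroup.zmultiples δ) ℚ)) ^ (n - 1) - C τ)) := ⟨hirr⟩
  exact ⟨(Ideal.Quotient.maximal_ideal_iff_isField_quotient _).mp (AdjoinRoot.span_maximal_of_irreducible (f := _)), aux_decomposition hn hτ0⟩
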